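/- For any abelian groups A and B, the kernel Ψ of the natural surjection from the tensor square to the exterior square satisfies Ψ(A ⊕ B) ≅ Ψ(A) ⊕ Ψ(B) ⊕ (A ⊗ B). -/

import Mathlib

open TensorProduct

/-- The alternating relations in `A ⊗ A`. -/
def altRel (A : Type*) [AddCommGroup A] : Submodule ℤ (A ⊗[ℤ] A) :=
  Submodule.span ℤ {x | ∃ a : A, a ⊗ₜ[ℤ] a = x}

/-- The second exterior power `Λ²(A)` of an abelian group. -/
def LambdaSq (A : Type*) [AddCommGroup A] := (A ⊗[ℤ] A) ⧸ altRel A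

noncomputable instance (A : Type*) [AddCommGroup A] : AddCommGroup (LambdaSq A) :=
  inferInstanceAs (AddCommGroup ((A ⊗[ℤ] A) ⧸ altRel A))

/-- The canonical projection `A ⊗ A → Λ²(A)`. -/
noncomputable def lamProj (A : Type*) [AddCommGroup A] : (A ⊗[ℤ] A) →ₗ[ℤ] LambdaSq A :=
  (altRel A).mkQ

/-- `Ψ(A) = Ker(A ⊗ A → Λ²(A))`. -/
noncomputable def Psi (A : Type*) [AddCommGroup A] : Submodule ℤ (A ⊗[ℤ] A) :=
  LinearMap.ker (lamProj A)

namespace PsiAux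

/-- Subtype of a product submodule is a product of subtypes. -/
def prodSubEquiv {R M N : Type*} [Semiring R] [AddCommMonoid M] [AddCommMonoid N]
    [Module R M] [Module R N] (p : Submodule R M) (q : Submodule R N) :
    ↥(p.prod q) ≃ₗ[R] ↥p × ↥q where
  toFun x := (⟨x.1.1, x.2.1⟩, ⟨x.1.2, x.2.2⟩)
  invFun x := ⟨(x.1.1, x.2.1), ⟨x.1.2, x.2.2⟩⟩
  left_inv x := rfl
  right_inv x := rfl
  map_add' x y := rfl
  map_smul' c x := rfl

/-- The graph of a linear map is equivalent to its domain. -/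
def graphEquiv {R M N : Type*} [Ring R] [AddCommGroup M] [AddCommGroup N]
    [Module R M] [Module R N] (f : M →ₗ[R] N) : ↥f.graph ≃ₗ[R] M where
  toFun x := x.1.1
  invFun m := ⟨(m, f m), by simp [LinearMap.mem_graph_iff]⟩
  left_inv x := Subtype.ext (Prod.ext rfl ((LinearMap.mem_graph_iff _ _).mp x.2).symm)
  right_inv m := rfl
  map_add' x y := rfl
  map_smul' c x := rfl

/-- Shuffle `(W × X) × (Y × Z) ≃ (W × Z) × (X × Y)`. -/
def shuffle (R W X Y Z : Type*) [Semiring R] [AddCommMonoid W] [AddCommMonoid X]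
    [AddCommMonoid Y] [AddCommMonoid Z] [Module R W] [Module R X] [Module R Y] [Module R Z] :
    ((W × X) × (Y × Z)) ≃ₗ[R] ((W × Z) × (X × Y)) where
  toFun p := ((p.1.1, p.2.2), (p.1.2, p.2.1))
  invFun p := ((p.1.1, p.2.1), (p.2.2, p.1.2))
  left_inv p := rfl
  right_inv p := rfl
  map_add' p q := rfl
  map_smul' c p := rfl

variable (A B : Type*) [AddCommGroup A] [AddCommGroup B]

/-- The decomposition of `(A × B) ⊗ (A × B)`. -/
noncomputable def bigE : ((A × B) ⊗[ℤ] (A × B)) ≃ₗ[ℤ]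
    (((A ⊗[ℤ] A) × (B ⊗[ℤ] B)) × ((A ⊗[ℤ] B) × (B ⊗[ℤ] A))) :=
  (TensorProduct.prodLeft ℤ ℤ A B (A × B)) ≪≫ₗ
    ((TensorProduct.prodRight ℤ ℤ A A B).prodCongr (TensorProduct.prodRight ℤ ℤ B A B)) ≪≫ₗ
    shuffle ℤ _ _ _ _

@[simp] theorem bigE_tmul (a a' : A) (b b' : B) :
    bigE A B ((a, b) ⊗ₜ[ℤ] (a', b')) =
      ((a ⊗ₜ[ℤ] a', b ⊗ₜ[ℤ] b'), (a ⊗ₜ[ℤ] b', b ⊗ₜ[ℤ] a')) := by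
  rfl

/-- The target submodule. -/
noncomputable def targetSub : Submodule ℤ
    (((A ⊗[ℤ] A) × (B ⊗[ℤ] B)) × ((A ⊗[ℤ] B) × (B ⊗[ℤ] A))) :=
  ((altRel A).prod (altRel B)).prod (TensorProduct.comm ℤ A B).toLinearMap.graph

theorem map_bigE : Submodule.map (bigE A B).toLinearMap (altRel (A × B)) = targetSub A B := by
  classical
  rw [altRel, Submodule.map_span]
  apply le_antisymm
  · rw [Submodule.span_le]
    rintro _ ⟨_, ⟨⟨a, b⟩, rfl⟩, rfl⟩
    simp only [LinearEquiv.coe_coe, bigE_tmul]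
    refine Submodule.mem_prod.mpr ⟨Submodule.mem_prod.mpr ⟨?_, ?_⟩, ?_⟩
    · exact Submodule.subset_span ⟨a, rfl⟩
    · exact Submodule.subset_span ⟨b, rfl⟩
    · exact (LinearMap.mem_graph_iff _ _).mpr (by simp)
  · rintro ⟨⟨w, z⟩, ⟨x, y⟩⟩ h
    obtain ⟨⟨hw, hz⟩, hg⟩ := Submodule.mem_prod.mp h
    rw [LinearMap.mem_graph_iff] at hg
    simp only at hg
    set T := Submodule.span ℤ ((bigE A B).toLinearMap '' {t | ∃ a : A × B, a ⊗ₜ[ℤ] a = t})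
      with hT
    have key : ∀ a : A × B, bigE A B (a ⊗ₜ[ℤ] a) ∈ T := fun a =>
      Submodule.subset_span ⟨a ⊗ₜ[ℤ] a, ⟨a, rfl⟩, rfl⟩
    have h1 : ((w, 0), (0, 0)) ∈ T := by
      have : ∀ u ∈ altRel A,
          ((((u, 0), (0, 0)) : ((A ⊗[ℤ] A) × (B ⊗[ℤ] B)) × ((A ⊗[ℤ] B) × (B ⊗[ℤ] A)))) ∈ T := by
        intro u hu
        induction hu using Submodule.span_induction with
        | mem v hv =>
          obtain ⟨a, rfl⟩ := hv
          have := key (a, 0)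
          simpa using this
        | zero => exact T.zero_mem
        | add u v _ _ hu hv => simpa [Prod.ext_iff] using T.add_mem hu hv
        | smul c u _ hu => simpa [Prod.ext_iff] using T.smul_mem c hu
      exact this w hw
    have h2 : (((0 : A ⊗[ℤ] A), z), ((0 : A ⊗[ℤ] B), (0 : B ⊗[ℤ] A))) ∈ T := by
      have : ∀ u ∈ altRel B,
          ((((0, u), (0, 0)) : ((A ⊗[ℤ] A) × (B ⊗[ℤ] B)) × ((A ⊗[ℤ] B) × (B ⊗[ℤ] A)))) ∈ T := by
        intro u hu
        induction hu using Submodule.span_induction with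
        | mem v hv =>
          obtain ⟨b, rfl⟩ := hv
          have := key (0, b)
          simpa using this
        | zero => exact T.zero_mem
        | add u v _ _ hu hv => simpa [Prod.ext_iff] using T.add_mem hu hv
        | smul c u _ hu => simpa [Prod.ext_iff] using T.smul_mem c hu
      exact this z hz
    have h3 : (((0 : A ⊗[ℤ] A), (0 : B ⊗[ℤ] B)), (x, TensorProduct.comm ℤ A B x)) ∈ T := by
      have : ∀ u : A ⊗[ℤ] B,
          ((((0, 0), (u, TensorProduct.comm ℤ A B u)) :
            ((A ⊗[ℤ] A) × (B ⊗[ℤ] B)) × ((A ⊗[ℤ] B) × (B ⊗[ℤ] A)))) ∈ T := by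
        intro u
        have htop : u ∈ Submodule.span ℤ {t : A ⊗[ℤ] B | ∃ m n, m ⊗ₜ[ℤ] n = t} := by
          convert Submodule.mem_top (x := u); exact TensorProduct.span_tmul_eq_top ℤ A B
        induction htop using Submodule.span_induction with
        | mem v hv =>
          obtain ⟨a, b, rfl⟩ := hv
          have := T.sub_mem (T.sub_mem (key (a, b)) (key (a, 0))) (key (0, b))
          simp [Prod.ext_iff] at this; exact this
        | zero => exact T.zero_mem
        | add u v _ _ hu hv => simpa [Prod.ext_iff] using T.add_mem hu hv
        | smul c u _ hu => simpa [Prod.ext_iff] using T.smul_mem c hu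
      exact this x
    have := T.add_mem (T.add_mem h1 h2) h3
    simpa [Prod.ext_iff, hg] using this

end PsiAux

open PsiAux in
/-- `Ψ(A ⊕ B) ≅ Ψ(A) ⊕ Ψ(B) ⊕ (A ⊗ B)`. -/
theorem Psi_prod_iso (A B : Type*) [AddCommGroup A] [AddCommGroup B] :
    Nonempty (↥(Psi (A × B)) ≃+ ↥(Psi A) × ↥(Psi B) × (A ⊗[ℤ] B)) := by
  have hPA : Psi A = altRel A := Submodule.ker_mkQ _
  have hPB : Psi B = altRel B := Submodule.ker_mkQ _
  have hPAB : Psi (A × B) = altRel (A × B) := Submodule.ker_mkQ _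
  have e1 : ↥(Psi (A × B)) ≃ₗ[ℤ] ↥(targetSub A B) :=
    (LinearEquiv.ofEq _ _ hPAB).trans
      (((bigE A B).submoduleMap (altRel (A × B))).trans
        (LinearEquiv.ofEq _ _ (map_bigE A B)))
  have e2 : ↥(targetSub A B) ≃ₗ[ℤ]
      (↥(altRel A) × ↥(altRel B)) × (A ⊗[ℤ] B) :=
    (prodSubEquiv _ _).trans
      ((prodSubEquiv (altRel A) (altRel B)).prodCongr
        (graphEquiv (TensorProduct.comm ℤ A B).toLinearMap))
  have e3 : ↥(altRel A) ≃ₗ[ℤ] ↥(Psi A) := LinearEquiv.ofEq _ _ hPA.symm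
  have e4 : ↥(altRel B) ≃ₗ[ℤ] ↥(Psi B) := LinearEquiv.ofEq _ _ hPB.symm
  exact ⟨((e1.trans e2).trans ((e3.prodCongr e4).prodCongr (LinearEquiv.refl ℤ _))).toAddEquiv.trans
    (AddEquiv.prodAssoc)⟩
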